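/- Let F be a nontrivial finite field, t ≥ 1, v ≥ 1, N ≥ 1, and Γ ≥ 1. Let α : Fin Γ → F be injective with α_b ≠ 0 for all b. For each client i ∈ [N], let G_i : Ω → (Fin v → F) be its gradient, K_i : Ω → (Fin v → F) its pad, and R_i : Ω → (Fin t → F) its sharing randomness, where the 2N random variables K_1, R_1, …, K_N, R_N are mutually independent, each K_i is uniform on F^v, each R_i is uniform on F^t, and the tuple (K_i, R_i)_{i∈[N]} is independent of (G_1, …, G_N). Define f_i(x) := Σ_{j=1}^{v} (G_{i,j} + K_{i,j}) x^{j−1} + Σ_{j=1}^{t} R_{i,j} x^{v+j−1}. Then for every subset T ⊆ Fin Γ with |T| ≤ t, the family of observations (f_i(α_b))_{i∈[N], b∈T} is independent of (G_1, …, G_N). -/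

import Mathlib

open MeasureTheory ProbabilityTheory
open scoped ENNReal

lemma meas_preimage_finset_inter {Ω A : Type*} [MeasurableSpace Ω] (μ : Measure Ω)
    [MeasurableSpace A] [MeasurableSingletonClass A] {f : Ω → A} (hf : Measurable f)
    {E : Set Ω} (hE : MeasurableSet E) (s : Finset A) :
    μ ((f ⁻¹' ↑s) ∩ E) = ∑ a ∈ s, μ (f ⁻¹' {a} ∩ E) := by
  have hdecomp : (f ⁻¹' ↑s) ∩ E = ⋃ a ∈ s, (f ⁻¹' {a} ∩ E) := by
    ext ω
    simp only [Set.mem_inter_iff, Set.mem_preimage, Finset.mem_coe, Set.mem_iUnion,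
      Set.mem_singleton_iff]
    constructor
    · rintro ⟨h1, h2⟩; exact ⟨f ω, h1, rfl, h2⟩
    · rintro ⟨a, ha, rfl, h2⟩; exact ⟨ha, h2⟩
  rw [hdecomp, measure_biUnion_finset]
  · intro a _ b _ hab
    simp only [Function.onFun, Set.disjoint_left]
    rintro ω ⟨h1, _⟩ ⟨h2, _⟩
    exact hab ((Set.mem_singleton_iff.mp h1).symm.trans (Set.mem_singleton_iff.mp h2))
  · intro a _
    exact (hf (measurableSet_singleton a)).inter hE

lemma indepFun_of_singleton_mul {Ω A B : Type*} [MeasurableSpace Ω] (μ : Measure Ω)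
    [MeasurableSpace A] [MeasurableSingletonClass A] [Fintype A]
    [MeasurableSpace B] [MeasurableSingletonClass B] [Fintype B]
    {f : Ω → A} {g : Ω → B} (hf : Measurable f) (hg : Measurable g)
    (h : ∀ a b, μ (f ⁻¹' {a} ∩ g ⁻¹' {b}) = μ (f ⁻¹' {a}) * μ (g ⁻¹' {b})) :
    IndepFun f g μ := by
  classical
  rw [indepFun_iff_measure_inter_preimage_eq_mul]
  intro s u hs hu
  have hsf : s = ↑s.toFinset := by simp
  have huf : u = ↑u.toFinset := by simp
  rw [hsf, huf]
  rw [meas_preimage_finset_inter μ hf (hg u.toFinset.measurableSet) s.toFinset]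
  have hterm : ∀ a, μ (f ⁻¹' {a} ∩ g ⁻¹' ↑u.toFinset)
      = μ (f ⁻¹' {a}) * μ (g ⁻¹' ↑u.toFinset) := by
    intro a
    rw [Set.inter_comm, meas_preimage_finset_inter μ hg (hf (measurableSet_singleton a)),
      ← sum_measure_preimage_singleton _ (fun y _ => hg (measurableSet_singleton y)),
      Finset.mul_sum]
    refine Finset.sum_congr rfl fun b _ => ?_
    rw [Set.inter_comm, h a b, mul_comm]
  simp_rw [hterm]
  rw [← Finset.sum_mul, sum_measure_preimage_singleton _ (fun y _ => hf (measurableSet_singleton y))]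

lemma card_fiber_mul_card {M P : Type*} [AddCommGroup M] [AddCommGroup P]
    [Fintype M] [Fintype P] [DecidableEq P]
    (Λ : M →+ P) (hsurj : Function.Surjective Λ) (w : P) :
    (Finset.univ.filter (fun m => Λ m = w)).card * Fintype.card P = Fintype.card M := by
  classical
  have hsame : ∀ w' : P, (Finset.univ.filter (fun m => Λ m = w')).card
      = (Finset.univ.filter (fun m => Λ m = w)).card := by
    intro w'
    obtain ⟨a, ha⟩ := hsurj w
    obtain ⟨a', ha'⟩ := hsurj w'
    refine Finset.card_bij' (fun m _ => m - a' + a) (fun m _ => m - a + a') ?_ ?_ ?_ ?_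
    · intro m hm
      simp only [Finset.mem_filter, Finset.mem_univ, true_and] at hm ⊢
      simp [map_add, map_sub, hm, ha, ha']
    · intro m hm
      simp only [Finset.mem_filter, Finset.mem_univ, true_and] at hm ⊢
      simp [map_add, map_sub, hm, ha, ha']
    · intro m _; abel_nf
    · intro m _; abel_nf
  have hcard : Fintype.card M
      = ∑ w' : P, (Finset.univ.filter (fun m => Λ m = w')).card := by
    rw [← Finset.card_univ, Finset.card_eq_sum_card_fiberwise
      (f := fun m => Λ m) (t := Finset.univ) (fun _ _ => Finset.mem_univ _)]
  rw [hcard]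
  simp_rw [hsame]
  rw [Finset.sum_const, Finset.card_univ, smul_eq_mul, mul_comm]

lemma exists_coeffs_eval {F : Type*} [Field F] {t Γ : ℕ} (ht : 1 ≤ t)
    (α : Fin Γ → F) (hα : Function.Injective α) (hα0 : ∀ b, α b ≠ 0) (v : ℕ)
    (T : Finset (Fin Γ)) (hT : T.card ≤ t) (y : {b // b ∈ T} → F) :
    ∃ c : Fin t → F, ∀ b : {b // b ∈ T},
      ∑ j : Fin t, c j * (α b.1) ^ (v + (j : ℕ)) = y b := by
  classical
  set r : Fin Γ → F := fun b => if h : b ∈ T then y ⟨b, h⟩ / (α b) ^ v else 0 with hr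
  set p := Lagrange.interpolate T α r with hp
  have hinj : Set.InjOn α T := hα.injOn
  have hdeg : p.natDegree < t := by
    rcases eq_or_ne p 0 with h0 | h0
    · rw [h0, Polynomial.natDegree_zero]; exact ht
    · have hd : p.degree < (t : ℕ) :=
        lt_of_lt_of_le (Lagrange.degree_interpolate_lt r hinj) (by exact_mod_cast Nat.cast_le.mpr hT)
      exact (Polynomial.natDegree_lt_iff_degree_lt h0).mpr hd
  refine ⟨fun j => p.coeff j, fun b => ?_⟩
  have heval : p.eval (α b.1) = r b.1 := Lagrange.eval_interpolate_at_node r hinj b.2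
  have hsum : ∑ j : Fin t, p.coeff j * (α b.1) ^ (j : ℕ) = p.eval (α b.1) := by
    rw [Polynomial.eval_eq_sum_range' hdeg, ← Fin.sum_univ_eq_sum_range]
  calc ∑ j : Fin t, p.coeff j * (α b.1) ^ (v + (j : ℕ))
      = (α b.1) ^ v * ∑ j : Fin t, p.coeff j * (α b.1) ^ (j : ℕ) := by
        rw [Finset.mul_sum]; refine Finset.sum_congr rfl fun j _ => ?_
        rw [pow_add]; ring
    _ = (α b.1) ^ v * r b.1 := by rw [hsum, heval]
    _ = y b := by
        rw [hr]; simp only [b.2, dif_pos]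
        rw [mul_div_assoc']; rw [mul_comm, mul_div_assoc,
          div_self (pow_ne_zero v (hα0 b.1)), mul_one]

lemma ennreal_fiber_frac {a b m : ℕ} (h : a * b = m) (hb : b ≠ 0) (hm : m ≠ 0) :
    (a : ℝ≥0∞) * (m : ℝ≥0∞)⁻¹ = (b : ℝ≥0∞)⁻¹ := by
  have ha : a ≠ 0 := by rintro rfl; simp at h; omega
  have hm' : (m : ℝ≥0∞) = (a : ℝ≥0∞) * (b : ℝ≥0∞) := by exact_mod_cast h.symm
  rw [hm', ENNReal.mul_inv (Or.inl (by exact_mod_cast ha)) (Or.inl (ENNReal.natCast_ne_top a)),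
    ← mul_assoc, ENNReal.mul_inv_cancel (by exact_mod_cast ha) (ENNReal.natCast_ne_top a), one_mul]



open MeasureTheory ProbabilityTheory

set_option maxHeartbeats 1000000 in
/-- Theorem 1, case (i): each of `N` clients pads its gradient `G i` with an independent
uniform key `K i`, secret-shares the padded gradient via the polynomial
`f_i(x) = ∑ j, (G i j + K i j) x^j + ∑ j, R i j x^(v+j)` with `t` uniform masking
coefficients `R i`, and sends the evaluation `f_i (α b)` to base station `b`. Then for any
set `T` of at most `t` base stations, the joint observations `(f_i (α b))_{i, b ∈ T}` are
independent of the gradients `(G 1, …, G N)`. -/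
theorem base_station_observations_indep_of_gradients
    {Ω : Type*} [MeasurableSpace Ω] (μ : Measure Ω) [IsProbabilityMeasure μ]
    {F : Type*} [Field F] [Fintype F]
    [MeasurableSpace F] [MeasurableSingletonClass F]
    {t v N Γ : ℕ} (ht : 1 ≤ t) (hv : 1 ≤ v) (hN : 1 ≤ N) (hΓ : 1 ≤ Γ)
    (α : Fin Γ → F) (hα : Function.Injective α) (hα0 : ∀ b, α b ≠ 0)
    (G : Fin N → Ω → Fin v → F) (hG : ∀ i, Measurable (G i))
    (K : Fin N → Ω → Fin v → F) (hK : ∀ i, Measurable (K i))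
    (R : Fin N → Ω → Fin t → F) (hR : ∀ i, Measurable (R i))
    (hKR : iIndepFun
      (β := fun s : Fin N ⊕ Fin N => match s with
        | .inl _ => Fin v → F
        | .inr _ => Fin t → F)
      (m := fun s => match s with
        | .inl _ => inferInstance
        | .inr _ => inferInstance)
      (fun s => match s with
        | .inl i => K i
        | .inr i => R i) μ)
    (hKunif : ∀ i, Measure.map (K i) μ = (PMF.uniformOfFintype (Fin v → F)).toMeasure)
    (hRunif : ∀ i, Measure.map (R i) μ = (PMF.uniformOfFintype (Fin t → F)).toMeasure)
    (hindepG : IndepFun (fun ω => (fun i => K i ω, fun i => R i ω))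
      (fun ω i => G i ω) μ) :
    ∀ T : Finset (Fin Γ), T.card ≤ t →
      IndepFun
        (fun ω => fun p : Fin N × {b // b ∈ T} =>
          ∑ j, (G p.1 ω j + K p.1 ω j) * (α p.2.1) ^ (j : ℕ)
            + ∑ j, R p.1 ω j * (α p.2.1) ^ (v + (j : ℕ)))
        (fun ω i => G i ω) μ := by
  intro T hT
  classical
  set Kj : Ω → (Fin N → Fin v → F) := fun ω i => K i ω with hKjdef
  set Rj : Ω → (Fin N → Fin t → F) := fun ω i => R i ω with hRjdef
  set Gj : Ω → (Fin N → Fin v → F) := fun ω i => G i ω with hGjdef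
  have hKjm : Measurable Kj := measurable_pi_lambda _ hK
  have hRjm : Measurable Rj := measurable_pi_lambda _ hR
  have hGjm : Measurable Gj := measurable_pi_lambda _ hG
  set ψ : (Fin N → Fin v → F) → (Fin N → Fin v → F) → (Fin N × {b // b ∈ T} → F) :=
    fun k g => fun p => ∑ j, (g p.1 j + k p.1 j) * (α p.2.1) ^ (j : ℕ) with hψdef
  set Λ0 : (Fin N → Fin t → F) → (Fin N × {b // b ∈ T} → F) :=
    fun r => fun p => ∑ j, r p.1 j * (α p.2.1) ^ (v + (j : ℕ)) with hΛdef
  set X : Ω → (Fin N × {b // b ∈ T} → F) := fun ω => ψ (Kj ω) (Gj ω) + Λ0 (Rj ω) with hXdef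
  have hXm : Measurable X := by
    exact (measurable_of_countable
      (fun q : ((Fin N → Fin v → F) × (Fin N → Fin t → F) × (Fin N → Fin v → F)) =>
        ψ q.1 q.2.2 + Λ0 q.2.1)).comp (hKjm.prodMk (hRjm.prodMk hGjm))
  -- Λ0 as an additive hom
  set Λh : (Fin N → Fin t → F) →+ (Fin N × {b // b ∈ T} → F) :=
    AddMonoidHom.mk' Λ0 (by
      intro r1 r2
      funext p
      simp only [hΛdef, Pi.add_apply, add_mul, Finset.sum_add_distrib]) with hΛh
  have hΛsurj : Function.Surjective Λ0 := by
    intro w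
    choose c hc using fun i : Fin N =>
      exists_coeffs_eval ht α hα hα0 v T hT (fun b => w (i, b))
    exact ⟨fun i => c i, funext fun p => hc p.1 p.2⟩
  -- cardinalities
  have hfiber : ∀ w : Fin N × {b // b ∈ T} → F,
      ((Finset.univ.filter (fun r => Λ0 r = w)).card : ℝ≥0∞)
        * ((Fintype.card (Fin N → Fin t → F) : ℝ≥0∞))⁻¹
        = ((Fintype.card (Fin N × {b // b ∈ T} → F) : ℝ≥0∞))⁻¹ := by
    intro w
    exact ennreal_fiber_frac (card_fiber_mul_card Λh hΛsurj w)
      Fintype.card_ne_zero Fintype.card_ne_zero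
  -- singleton probabilities for R and K
  have hRsing : ∀ i (r0 : Fin t → F), μ (R i ⁻¹' {r0})
      = ((Fintype.card (Fin t → F) : ℝ≥0∞))⁻¹ := by
    intro i r0
    rw [← Measure.map_apply (hR i) (measurableSet_singleton _), hRunif i,
      PMF.toMeasure_apply_singleton _ _ (measurableSet_singleton _),
      PMF.uniformOfFintype_apply]
  have hKsing : ∀ i (k0 : Fin v → F), μ (K i ⁻¹' {k0})
      = ((Fintype.card (Fin v → F) : ℝ≥0∞))⁻¹ := by
    intro i k0
    rw [← Measure.map_apply (hK i) (measurableSet_singleton _), hKunif i,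
      PMF.toMeasure_apply_singleton _ _ (measurableSet_singleton _),
      PMF.uniformOfFintype_apply]
  have hRprod : ∀ r : Fin N → Fin t → F, (∏ i, μ (R i ⁻¹' {r i}))
      = ((Fintype.card (Fin N → Fin t → F) : ℝ≥0∞))⁻¹ := by
    intro r
    simp_rw [hRsing]
    rw [Finset.prod_const, Finset.card_univ, Fintype.card_fin, ← ENNReal.inv_pow]
    congr 1
    simp [Fintype.card_fun]
  have hKprod : ∀ k : Fin N → Fin v → F, (∏ i, μ (K i ⁻¹' {k i}))
      = ((Fintype.card (Fin N → Fin v → F) : ℝ≥0∞))⁻¹ := by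
    intro k
    simp_rw [hKsing]
    rw [Finset.prod_const, Finset.card_univ, Fintype.card_fin, ← ENNReal.inv_pow]
    congr 1
    simp [Fintype.card_fun]
  -- joint singleton of (Kj, Rj)
  have hKRsing : ∀ (k : Fin N → Fin v → F) (r : Fin N → Fin t → F),
      μ ((fun ω => (Kj ω, Rj ω)) ⁻¹' {(k, r)})
        = ((Fintype.card (Fin N → Fin v → F) : ℝ≥0∞))⁻¹
          * ((Fintype.card (Fin N → Fin t → F) : ℝ≥0∞))⁻¹ := by
    intro k r
    set S : Fin N ⊕ Fin N → Set Ω :=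
      fun s => Sum.rec (fun i => K i ⁻¹' {k i}) (fun i => R i ⁻¹' {r i}) s with hS
    have hset : (fun ω => (Kj ω, Rj ω)) ⁻¹' {(k, r)} = ⋂ s, S s := by
      ext ω
      simp only [Set.mem_preimage, Set.mem_singleton_iff, Prod.mk.injEq, Set.mem_iInter,
        funext_iff, hKjdef, hRjdef]
      constructor
      · rintro ⟨h1, h2⟩ s
        cases s with
        | inl i => exact funext (h1 i)
        | inr i => exact funext (h2 i)
      · intro hs
        exact ⟨fun i x => congrFun (hs (.inl i)) x, fun i x => congrFun (hs (.inr i)) x⟩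
    have hmeas : μ (⋂ s, S s) = ∏ s, μ (S s) := by
      refine hKR.meas_iInter fun s => ?_
      cases s with
      | inl i => exact ⟨{k i}, measurableSet_singleton _, rfl⟩
      | inr i => exact ⟨{r i}, measurableSet_singleton _, rfl⟩
    rw [hset, hmeas, Fintype.prod_sum_type]
    have h1 : (∏ i : Fin N, μ (S (.inl i))) = ∏ i, μ (K i ⁻¹' {k i}) := rfl
    have h2 : (∏ i : Fin N, μ (S (.inr i))) = ∏ i, μ (R i ⁻¹' {r i}) := rfl
    rw [h1, h2, hKprod, hRprod]
  -- factorization against G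
  have hGKR : ∀ (kr : (Fin N → Fin v → F) × (Fin N → Fin t → F)) (g : Fin N → Fin v → F),
      μ ((fun ω => (Kj ω, Rj ω)) ⁻¹' {kr} ∩ Gj ⁻¹' {g})
        = μ ((fun ω => (Kj ω, Rj ω)) ⁻¹' {kr}) * μ (Gj ⁻¹' {g}) := by
    intro kr g
    exact hindepG.measure_inter_preimage_eq_mul _ _
      (measurableSet_singleton _) (measurableSet_singleton _)
  -- the main computation
  have hmain : ∀ (x : Fin N × {b // b ∈ T} → F) (g : Fin N → Fin v → F),
      μ (X ⁻¹' {x} ∩ Gj ⁻¹' {g})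
        = ((Fintype.card (Fin N × {b // b ∈ T} → F) : ℝ≥0∞))⁻¹ * μ (Gj ⁻¹' {g}) := by
    intro x g
    have hEm : MeasurableSet (X ⁻¹' {x} ∩ Gj ⁻¹' {g}) :=
      (hXm (measurableSet_singleton x)).inter (hGjm (measurableSet_singleton g))
    have hKRm : Measurable (fun ω => (Kj ω, Rj ω)) := hKjm.prodMk hRjm
    have h1 : μ (X ⁻¹' {x} ∩ Gj ⁻¹' {g})
        = ∑ kr : (Fin N → Fin v → F) × (Fin N → Fin t → F),
          μ ((fun ω => (Kj ω, Rj ω)) ⁻¹' {kr} ∩ (X ⁻¹' {x} ∩ Gj ⁻¹' {g})) := by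
      have := meas_preimage_finset_inter μ hKRm hEm Finset.univ
      rw [Finset.coe_univ, Set.preimage_univ, Set.univ_inter] at this
      exact this
    have h2 : ∀ (k : Fin N → Fin v → F) (r : Fin N → Fin t → F),
        (fun ω => (Kj ω, Rj ω)) ⁻¹' {(k, r)} ∩ (X ⁻¹' {x} ∩ Gj ⁻¹' {g})
          = if ψ k g + Λ0 r = x
            then (fun ω => (Kj ω, Rj ω)) ⁻¹' {(k, r)} ∩ Gj ⁻¹' {g} else ∅ := by
      intro k r
      split_ifs with hcond
      · ext ω
        simp only [Set.mem_inter_iff, Set.mem_preimage, Set.mem_singleton_iff, Prod.mk.injEq,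
          hXdef]
        constructor
        · rintro ⟨⟨hk, hr⟩, _, hg⟩; exact ⟨⟨hk, hr⟩, hg⟩
        · rintro ⟨⟨hk, hr⟩, hg⟩
          exact ⟨⟨hk, hr⟩, by rw [hk, hr, hg, hcond], hg⟩
      · ext ω
        simp only [Set.mem_inter_iff, Set.mem_preimage, Set.mem_singleton_iff, Prod.mk.injEq,
          hXdef, Set.mem_empty_iff_false, iff_false, not_and]
        rintro ⟨hk, hr⟩ hx
        exact fun hg => hcond (by rw [← hk, ← hr, ← hg]; exact hx)
    have h3 : μ (X ⁻¹' {x} ∩ Gj ⁻¹' {g})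
        = ∑ k : Fin N → Fin v → F, ∑ r : Fin N → Fin t → F,
          (if ψ k g + Λ0 r = x
            then ((Fintype.card (Fin N → Fin v → F) : ℝ≥0∞))⁻¹
              * ((Fintype.card (Fin N → Fin t → F) : ℝ≥0∞))⁻¹ * μ (Gj ⁻¹' {g}) else 0) := by
      rw [h1, Fintype.sum_prod_type]
      refine Finset.sum_congr rfl fun k _ => Finset.sum_congr rfl fun r _ => ?_
      rw [h2 k r]
      split_ifs with hcond
      · rw [hGKR (k, r) g, hKRsing k r]
      · exact measure_empty
    have h4 : ∀ k : Fin N → Fin v → F,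
        (∑ r : Fin N → Fin t → F,
          (if ψ k g + Λ0 r = x
            then ((Fintype.card (Fin N → Fin v → F) : ℝ≥0∞))⁻¹
              * ((Fintype.card (Fin N → Fin t → F) : ℝ≥0∞))⁻¹ * μ (Gj ⁻¹' {g}) else 0))
          = ((Fintype.card (Fin N → Fin v → F) : ℝ≥0∞))⁻¹
            * ((Fintype.card (Fin N × {b // b ∈ T} → F) : ℝ≥0∞))⁻¹ * μ (Gj ⁻¹' {g}) := by
      intro k
      have hiff : ∀ r : Fin N → Fin t → F,
          (ψ k g + Λ0 r = x) ↔ (Λ0 r = x - ψ k g) := by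
        intro r
        constructor
        · intro h; rw [← h]; abel
        · intro h; rw [h]; abel
      rw [Finset.sum_ite, Finset.sum_const, Finset.sum_const_zero, add_zero, nsmul_eq_mul]
      have hfilter : Finset.univ.filter
            (fun r : Fin N → Fin t → F => ψ k g + Λ0 r = x)
          = Finset.univ.filter (fun r => Λ0 r = x - ψ k g) :=
        Finset.filter_congr fun r _ => by rw [hiff r]
      rw [hfilter]
      rw [show (((Finset.univ.filter
          (fun r : Fin N → Fin t → F => Λ0 r = x - ψ k g)).card : ℝ≥0∞)
          * (((Fintype.card (Fin N → Fin v → F) : ℝ≥0∞))⁻¹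
            * ((Fintype.card (Fin N → Fin t → F) : ℝ≥0∞))⁻¹ * μ (Gj ⁻¹' {g})))
        = ((Fintype.card (Fin N → Fin v → F) : ℝ≥0∞))⁻¹
          * (((Finset.univ.filter
          (fun r : Fin N → Fin t → F => Λ0 r = x - ψ k g)).card : ℝ≥0∞)
          * ((Fintype.card (Fin N → Fin t → F) : ℝ≥0∞))⁻¹) * μ (Gj ⁻¹' {g}) from by ring,
        hfiber (x - ψ k g)]
    calc μ (X ⁻¹' {x} ∩ Gj ⁻¹' {g})
        = ∑ k : Fin N → Fin v → F,
          (((Fintype.card (Fin N → Fin v → F) : ℝ≥0∞))⁻¹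
            * ((Fintype.card (Fin N × {b // b ∈ T} → F) : ℝ≥0∞))⁻¹ * μ (Gj ⁻¹' {g})) := by
          rw [h3]; exact Finset.sum_congr rfl fun k _ => h4 k
      _ = (Fintype.card (Fin N → Fin v → F) : ℝ≥0∞)
            * (((Fintype.card (Fin N → Fin v → F) : ℝ≥0∞))⁻¹
              * ((Fintype.card (Fin N × {b // b ∈ T} → F) : ℝ≥0∞))⁻¹ * μ (Gj ⁻¹' {g})) := by
          rw [Finset.sum_const, Finset.card_univ, nsmul_eq_mul]
      _ = ((Fintype.card (Fin N × {b // b ∈ T} → F) : ℝ≥0∞))⁻¹ * μ (Gj ⁻¹' {g}) := by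
          rw [← mul_assoc, ← mul_assoc,
            ENNReal.mul_inv_cancel (by exact_mod_cast Fintype.card_ne_zero)
              (ENNReal.natCast_ne_top _), one_mul]
  have hXsing : ∀ x : Fin N × {b // b ∈ T} → F,
      μ (X ⁻¹' {x}) = ((Fintype.card (Fin N × {b // b ∈ T} → F) : ℝ≥0∞))⁻¹ := by
    intro x
    have hdec := meas_preimage_finset_inter μ hGjm (hXm (measurableSet_singleton x)) Finset.univ
    rw [Finset.coe_univ, Set.preimage_univ, Set.univ_inter] at hdec
    rw [hdec]
    have : ∀ g : Fin N → Fin v → F, μ (Gj ⁻¹' {g} ∩ X ⁻¹' {x})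
        = ((Fintype.card (Fin N × {b // b ∈ T} → F) : ℝ≥0∞))⁻¹ * μ (Gj ⁻¹' {g}) := by
      intro g; rw [Set.inter_comm]; exact hmain x g
    simp_rw [this]
    rw [← Finset.mul_sum,
      sum_measure_preimage_singleton _ (fun g (_ : g ∈ Finset.univ) =>
        hGjm (measurableSet_singleton g)),
      Finset.coe_univ, Set.preimage_univ, measure_univ, mul_one]
  have hXeq : (fun ω => fun p : Fin N × {b // b ∈ T} =>
      ∑ j, (G p.1 ω j + K p.1 ω j) * (α p.2.1) ^ (j : ℕ)
        + ∑ j, R p.1 ω j * (α p.2.1) ^ (v + (j : ℕ))) = X := rfl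
  rw [hXeq]
  refine indepFun_of_singleton_mul μ hXm hGjm fun a b => ?_
  rw [hmain a b, hXsing a]
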